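/- Let A : ℕ → ℝ be nonnegative, let α(n) = n − 2, and suppose sup_n (A(n-1) + A(n-2)) < 1 and ∑ A(n) = ∞. Then every solution of x(n+1) − x(n) + A(n)·x(n-2) = 0 converges to 0 as n → ∞. -/

import Mathlib

open Filter Finset

section Aux

variable {A x : ℕ → ℝ} {c : ℝ}

/-- Key estimate: if `x m ≤ 0` at the last sign change and `x` is nonnegative on `(m, n]`,
then `x n ≤ c * B` where `B` bounds `|x (m-1)|, |x (m-2)|`. -/
private lemma key_est (hA : ∀ n, 0 ≤ A n) (hwin : ∀ n, A n + A (n + 1) ≤ c)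
    (hc1 : c < 1)
    (hrec : ∀ n, 2 ≤ n → x (n + 1) = x n - A n * x (n - 2))
    {B : ℝ} {m n : ℕ} (hB : 0 ≤ B) (hm : 2 ≤ m) (hmn : m < n)
    (hxm : x m ≤ 0) (h1 : |x (m - 1)| ≤ B) (h2 : |x (m - 2)| ≤ B)
    (hpos : ∀ k, m < k → k ≤ n → 0 ≤ x k) : x n ≤ c * B := by
  rw [abs_le] at h1 h2
  have e1 := hrec m hm
  have e2 := hrec (m + 1) (by omega)
  have e3 := hrec (m + 2) (by omega)
  rw [show m + 1 - 2 = m - 1 from by omega] at e2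
  rw [show m + 2 - 2 = m from by omega] at e3
  have hAm : A m ≤ c := by have := hwin m; have := hA (m + 1); linarith
  have hAm2 : A (m + 2) ≤ 1 := by have := hwin (m + 2); have := hA (m + 3); linarith
  have p1 : A m * (-B) ≤ A m * x (m - 2) := mul_le_mul_of_nonneg_left h2.1 (hA m)
  have p2 : A (m + 1) * (-B) ≤ A (m + 1) * x (m - 1) :=
    mul_le_mul_of_nonneg_left h1.1 (hA (m + 1))
  have p3 : A m * B ≤ c * B := mul_le_mul_of_nonneg_right hAm hB
  have p4 : (A m + A (m + 1)) * B ≤ c * B := mul_le_mul_of_nonneg_right (hwin m) hB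
  have p5 : x m * 1 ≤ x m * A (m + 2) := mul_le_mul_of_nonpos_left hAm2 hxm
  have b1 : x (m + 1) ≤ c * B := by nlinarith
  have b2 : x (m + 2) ≤ c * B := by nlinarith
  have b3 : x (m + 3) ≤ c * B := by nlinarith
  have hcase : n = m + 1 ∨ n = m + 2 ∨ m + 3 ≤ n := by omega
  rcases hcase with rfl | rfl | h3
  · exact b1
  · exact b2
  · have mono : ∀ j, m + 3 ≤ j → j ≤ n → x j ≤ c * B := by
      intro j hj
      induction j, hj using Nat.le_induction with
      | base => intro _; exact b3
      | succ j hj ih =>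
        intro hjn
        have hxj : x j ≤ c * B := ih (by omega)
        have hr := hrec j (by omega)
        have h0 : 0 ≤ x (j - 2) := hpos (j - 2) (by omega) (by omega)
        nlinarith [mul_nonneg (hA j) h0]
    exact mono n h3 le_rfl

private lemma decr (hA : ∀ n, 0 ≤ A n)
    (hrec : ∀ n, 2 ≤ n → x (n + 1) = x n - A n * x (n - 2))
    {a b : ℕ} (ha : 4 ≤ a) (hab : a ≤ b)
    (hpos : ∀ k, 2 ≤ k → k ≤ b - 2 → 0 ≤ x k) : x b ≤ x a := by
  induction b, hab using Nat.le_induction with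
  | base => exact le_rfl
  | succ b hb ih =>
    have h1 : x b ≤ x a := ih (fun k hk hk2 => hpos k hk (by omega))
    have hr := hrec b (by omega)
    have h0 : 0 ≤ x (b - 2) := hpos (b - 2) (by omega) (by omega)
    nlinarith [mul_nonneg (hA b) h0]

private lemma osc_est (hA : ∀ n, 0 ≤ A n) (hwin : ∀ n, A n + A (n + 1) ≤ c)
    (hc1 : c < 1)
    (hrec : ∀ n, 2 ≤ n → x (n + 1) = x n - A n * x (n - 2))
    {B : ℝ} {N n : ℕ} (hB : 0 ≤ B) (hN : 2 ≤ N)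
    (hex : ∃ m, N ≤ m ∧ m < n ∧ x m ≤ 0)
    (hb : ∀ k, k < n → N - 2 ≤ k → |x k| ≤ B)
    (hxn : 0 < x n) : x n ≤ c * B := by
  classical
  obtain ⟨m₀, hm₀N, hm₀n, hm₀x⟩ := hex
  set P : ℕ → Prop := fun m => N ≤ m ∧ x m ≤ 0 with hPdef
  set m := Nat.findGreatest P (n - 1) with hmdef
  have hPm : P m := Nat.findGreatest_spec (m := m₀) (by omega) ⟨hm₀N, hm₀x⟩
  have hmle : m ≤ n - 1 := Nat.findGreatest_le (n - 1)
  have hmlt : m < n := by omega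
  have hpos : ∀ k, m < k → k ≤ n → 0 ≤ x k := by
    intro k hk1 hk2
    rcases eq_or_lt_of_le hk2 with rfl | hk
    · exact hxn.le
    · by_contra h
      exact (Nat.findGreatest_is_greatest hk1 (by omega)) ⟨by omega, by linarith⟩
  exact key_est hA hwin hc1 hrec hB (by omega) hmlt hPm.2
    (hb _ (by omega) (by omega)) (hb _ (by omega) (by omega)) hpos

private lemma upper (hA : ∀ n, 0 ≤ A n) (hwin : ∀ n, A n + A (n + 1) ≤ c)
    (hc1 : c < 1)
    (hrec : ∀ n, 2 ≤ n → x (n + 1) = x n - A n * x (n - 2))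
    {B : ℝ} {n : ℕ} (hB : 0 ≤ B) (h6 : 6 ≤ n)
    (hsml : ∀ k, k < n → |x k| ≤ B) : x n ≤ B := by
  rcases le_or_gt (x n) 0 with h | h
  · linarith
  by_cases hex : ∃ m, 2 ≤ m ∧ m < n ∧ x m ≤ 0
  · obtain ⟨m, h1, h2, h3⟩ := hex
    have hcb : x n ≤ c * B :=
      osc_est hA hwin hc1 hrec hB le_rfl ⟨m, h1, h2, h3⟩
        (fun k hk _ => hsml k hk) h
    nlinarith
  · push_neg at hex
    have hxpos : ∀ m, 2 ≤ m → m < n → 0 < x m := by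
      intro m hm hmn
      by_contra hc
      exact absurd (hex m hm hmn) (by push_neg; linarith)
    have h5 : x n ≤ x 5 :=
      decr hA hrec (by norm_num) (by omega)
        (fun k hk hk2 => (hxpos k hk (by omega)).le)
    have := hsml 5 (by omega)
    rw [abs_le] at this
    linarith

private lemma mono_case (hA : ∀ n, 0 ≤ A n)
    (hdiv : Tendsto (fun N => ∑ n ∈ Finset.range N, A n) atTop atTop)
    (hrec : ∀ n, 2 ≤ n → x (n + 1) = x n - A n * x (n - 2))
    {N : ℕ} (hpos : ∀ m, N ≤ m → 0 < x m) :
    Tendsto x atTop (nhds 0) := by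
  set a := N + 2 with ha
  set g : ℕ → ℝ := fun k => x (a + k) with hg
  have hanti : Antitone g := by
    apply antitone_nat_of_succ_le
    intro k
    have hr := hrec (a + k) (by omega)
    have h0 : 0 < x (a + k - 2) := hpos (a + k - 2) (by omega)
    have hle : x (a + k + 1) ≤ x (a + k) := by nlinarith [mul_nonneg (hA (a + k)) h0.le]
    show x (a + (k + 1)) ≤ x (a + k)
    exact hle
  have hbdd : BddBelow (Set.range g) := by
    refine ⟨0, ?_⟩
    rintro y ⟨k, rfl⟩
    exact (hpos (a + k) (by omega)).le
  have htend : Tendsto g atTop (nhds (⨅ k, g k)) := tendsto_atTop_ciInf hanti hbdd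
  set L := ⨅ k, g k with hL
  have hL0 : 0 ≤ L := le_ciInf fun k => (hpos (a + k) (by omega)).le
  have hLle : ∀ k, L ≤ g k := fun k => ciInf_le hbdd k
  have hLzero : L = 0 := by
    by_contra hne
    have hLpos : 0 < L := lt_of_le_of_ne hL0 (Ne.symm hne)
    have hxL : ∀ n, a ≤ n → L ≤ x n := by
      intro n hn
      have h := hLle (n - a)
      have h2 : L ≤ x (a + (n - a)) := h
      rwa [show a + (n - a) = n from by omega] at h2
    -- telescoping bound
    have hsum : ∀ k, L * ∑ i ∈ range k, A (a + 2 + i) ≤ x (a + 2) := by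
      intro k
      have htel : ∑ i ∈ range k, (x (a + 2 + i) - x (a + 2 + i + 1)) =
          x (a + 2) - x (a + 2 + k) := by
        have := Finset.sum_range_sub' (f := fun i => x (a + 2 + i)) k
        simpa [add_assoc] using this
      have hterm : ∀ i ∈ range k, L * A (a + 2 + i) ≤
          x (a + 2 + i) - x (a + 2 + i + 1) := by
        intro i _
        have hr := hrec (a + 2 + i) (by omega)
        have hxi : L ≤ x (a + 2 + i - 2) := by
          have : a + 2 + i - 2 = a + i := by omega
          rw [this]; exact hxL (a + i) (by omega)
        have hAi := hA (a + 2 + i)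
        nlinarith [mul_le_mul_of_nonneg_left hxi hAi]
      have := Finset.sum_le_sum hterm
      rw [htel] at this
      have hxk : 0 ≤ x (a + 2 + k) := (hpos (a + 2 + k) (by omega)).le
      calc L * ∑ i ∈ range k, A (a + 2 + i)
          = ∑ i ∈ range k, L * A (a + 2 + i) := by rw [Finset.mul_sum]
        _ ≤ x (a + 2) - x (a + 2 + k) := this
        _ ≤ x (a + 2) := by linarith
    have hbound : ∀ K, ∑ n ∈ range K, A n ≤ (∑ n ∈ range (a + 2), A n) + x (a + 2) / L := by
      intro K
      rcases le_or_gt K (a + 2) with hK | hK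
      · have h1 : ∑ n ∈ range K, A n ≤ ∑ n ∈ range (a + 2), A n :=
          Finset.sum_le_sum_of_subset_of_nonneg
            (Finset.range_subset_range.mpr hK) (fun i _ _ => hA i)
        have h2 : 0 ≤ x (a + 2) / L :=
          div_nonneg (hpos (a + 2) (by omega)).le hLpos.le
        linarith
      · have hKe : K = (a + 2) + (K - (a + 2)) := by omega
        rw [hKe, Finset.sum_range_add]
        have := hsum (K - (a + 2))
        have h2 : ∑ i ∈ range (K - (a + 2)), A (a + 2 + i) ≤ x (a + 2) / L := by
          rw [le_div_iff₀ hLpos]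
          nlinarith
        linarith
    obtain ⟨K, hK⟩ := (hdiv.eventually (eventually_gt_atTop
      ((∑ n ∈ range (a + 2), A n) + x (a + 2) / L))).exists
    exact absurd (hbound K) (by linarith)
  rw [hLzero] at htend
  have h' : Tendsto (fun k => x (k + a)) atTop (nhds 0) := by
    simpa [hg, add_comm] using htend
  exact (Filter.tendsto_add_atTop_iff_nat a).mp h'

end Aux

theorem stmt_16 (A x : ℕ → ℝ) (hA : ∀ n, 0 ≤ A n)
    (hsup : ∃ c : ℝ, c < 1 ∧ ∀ n, A (n - 1) + A (n - 2) ≤ c)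
    (hdiv : Filter.Tendsto (fun N => ∑ n ∈ Finset.range N, A n) Filter.atTop Filter.atTop)
    (hx : ∀ n, 2 ≤ n → x (n + 1) - x n + A n * x (n - 2) = 0) :
    Filter.Tendsto x Filter.atTop (nhds 0) := by
  obtain ⟨c, hc1, hsupc⟩ := hsup
  have hwin : ∀ n, A n + A (n + 1) ≤ c := by
    intro n
    have := hsupc (n + 2)
    rw [show n + 2 - 1 = n + 1 from by omega, show n + 2 - 2 = n from by omega] at this
    linarith
  have hc0 : 0 ≤ c := by have := hwin 0; have := hA 0; have := hA 1; linarith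
  have hrec : ∀ n, 2 ≤ n → x (n + 1) = x n - A n * x (n - 2) := by
    intro n hn; have := hx n hn; linarith
  have hrecneg : ∀ n, 2 ≤ n → (fun k => -x k) (n + 1) =
      (fun k => -x k) n - A n * (fun k => -x k) (n - 2) := by
    intro n hn; simp only; rw [hrec n hn]; ring
  by_cases hposinf : ∀ N, ∃ m, N ≤ m ∧ x m ≤ 0
  · by_cases hneginf : ∀ N, ∃ m, N ≤ m ∧ 0 ≤ x m
    · -- oscillatory case
      set B := |x 0| + |x 1| + |x 2| + |x 3| + |x 4| + |x 5| with hBdef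
      have hB : 0 ≤ B := by positivity
      have hBk : ∀ k, k ≤ 5 → |x k| ≤ B := by
        intro k hk
        have a0 := abs_nonneg (x 0); have a1 := abs_nonneg (x 1)
        have a2 := abs_nonneg (x 2); have a3 := abs_nonneg (x 3)
        have a4 := abs_nonneg (x 4); have a5 := abs_nonneg (x 5)
        interval_cases k <;> simp only [hBdef] <;> linarith
      have hbd : ∀ n, |x n| ≤ B := by
        intro n
        induction n using Nat.strong_induction_on with
        | _ n ih =>
          rcases le_or_gt n 5 with h | h
          · exact hBk n h
          · refine abs_le.mpr ⟨?_, ?_⟩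
            · have := upper (x := fun k => -x k) (n := n) hA hwin hc1 hrecneg hB (by omega)
                (fun k hk => by simpa using ih k hk)
              have h2 : -x n ≤ B := by simpa using this
              linarith
            · exact upper (n := n) hA hwin hc1 hrec hB (by omega) (fun k hk => ih k hk)
      have step : ∀ (B' : ℝ) (N : ℕ), 0 ≤ B' → 2 ≤ N →
          (∀ k, N ≤ k → |x k| ≤ B') →
          ∃ N', 2 ≤ N' ∧ ∀ n, N' ≤ n → |x n| ≤ c * B' := by
        intro B' N hB' hN hb
        obtain ⟨m₀, hm₀N, hm₀x⟩ := hposinf (N + 2)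
        obtain ⟨m₁, hm₁N, hm₁x⟩ := hneginf (N + 2)
        refine ⟨max m₀ m₁ + 1, by omega, ?_⟩
        intro n hn
        rcases lt_trichotomy (x n) 0 with h | h | h
        · have := osc_est (x := fun k => -x k) (n := n) hA hwin hc1 hrecneg hB'
            (N := N + 2) (by omega)
            ⟨m₁, hm₁N, by omega, by simpa using hm₁x⟩
            (fun k _ hk2 => by simpa using hb k (by omega))
            (by simpa using h)
          rw [abs_of_neg h]; linarith
        · rw [h, abs_zero]; positivity
        · have := osc_est (n := n) hA hwin hc1 hrec hB' (N := N + 2) (by omega)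
            ⟨m₀, hm₀N, by omega, hm₀x⟩
            (fun k _ hk2 => hb k (by omega)) h
          rw [abs_of_pos h]; exact this
      have iter : ∀ j : ℕ, ∃ N, 2 ≤ N ∧ ∀ n, N ≤ n → |x n| ≤ c ^ j * B := by
        intro j
        induction j with
        | zero => exact ⟨2, le_rfl, fun n _ => by simpa using hbd n⟩
        | succ j ih =>
          obtain ⟨N, hN, hbj⟩ := ih
          obtain ⟨N', hN', h3⟩ :=
            step (c ^ j * B) N (mul_nonneg (pow_nonneg hc0 j) hB) hN hbj
          refine ⟨N', hN', fun n hn => ?_⟩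
          calc |x n| ≤ c * (c ^ j * B) := h3 n hn
            _ = c ^ (j + 1) * B := by ring
      have hgeo : Tendsto (fun j : ℕ => c ^ j * B) atTop (nhds 0) := by
        have := (tendsto_pow_atTop_nhds_zero_of_lt_one hc0 hc1).mul_const B
        simpa using this
      rw [Metric.tendsto_atTop]
      intro ε hε
      obtain ⟨J, hJ⟩ := (Metric.tendsto_atTop.mp hgeo ε hε)
      have hJε : c ^ J * B < ε := by
        have := hJ J le_rfl
        rw [Real.dist_eq, sub_zero, abs_of_nonneg (mul_nonneg (pow_nonneg hc0 J) hB)] at this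
        exact this
      obtain ⟨N, _, hNb⟩ := iter J
      refine ⟨N, fun n hn => ?_⟩
      rw [Real.dist_eq, sub_zero]
      exact lt_of_le_of_lt (hNb n hn) hJε
    · push_neg at hneginf
      obtain ⟨N, hN⟩ := hneginf
      have hpos : ∀ m, N ≤ m → 0 < (fun k => -x k) m := by
        intro m hm; simp only; have := hN m hm; linarith
      have := mono_case (x := fun k => -x k) hA hdiv hrecneg hpos
      have h2 : Tendsto (fun n => -(-x n)) atTop (nhds (-0)) := this.neg
      simpa using h2
  · push_neg at hposinf
    obtain ⟨N, hN⟩ := hposinf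
    exact mono_case hA hdiv hrec (fun m hm => by linarith [hN m hm])
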